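/- Fix K ≥ 2 and for d > 0 define n_k = ∑_{j=1}^k d^j and p_k = d^k / ∑_{j=1}^K d^j for k = 1,...,K, so that F_k = n_k/n_K. Then all crossing points z_{k,l} = (F_k n_l - F_l n_k)/(F_l - F_k) equal 0, the one-block expected capacity equals C_exp(F_G^{(d)},1) = log((n_K+1)/n_K), and the multiplicative gap M(F_G^{(d)},1) = C_erg(F_G^{(d)})/C_exp(F_G^{(d)},1) converges to K as d → ∞. -/

import Mathlib

open Real Filter

/-- Crossing point of the marginal utility functions `u_k` and `u_l`. -/
noncomputable def zc (n F : ℕ → ℝ) (k l : ℕ) : ℝ :=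
  (F k * n l - F l * n k) / (F l - F k)

/-- Achievable expected-rate values of the one-block power allocation program
in terms of the inverse power gains `n_k = 1/g_k`. -/
def CexpSetN (K : ℕ) (n F : ℕ → ℝ) : Set ℝ :=
  {r | ∃ β : ℕ → ℝ, β 0 = 0 ∧ (∀ k, 1 ≤ k → k ≤ K → β (k - 1) ≤ β k) ∧ β K ≤ 1 ∧
    r = ∑ k ∈ Finset.Icc 1 K,
      F k * Real.log ((n k + β k) / (n k + β (k - 1)))}

/-- Key per-term inequality, proved via Bernoulli's inequality. -/
lemma key_ineq {m M a b : ℝ} (hm : 0 < m) (hmM : m ≤ M) (ha : 0 ≤ a) (hab : a ≤ b) :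
    m / M * Real.log ((m + b) / (m + a)) ≤ Real.log ((M + b) / (M + a)) := by
  have hM : 0 < M := lt_of_lt_of_le hm hmM
  have hma : 0 < m + a := by linarith
  have hMa : 0 < M + a := by linarith
  have hmb : 0 < m + b := by linarith
  have hMb : 0 < M + b := by linarith
  set s : ℝ := (b - a) / (M + a) with hs_def
  have hs0 : 0 ≤ s := div_nonneg (by linarith) hMa.le
  have hp1 : 1 ≤ M / m := (one_le_div hm).mpr hmM
  have hbern : 1 + (M / m) * s ≤ (1 + s) ^ (M / m) :=
    one_add_mul_self_le_rpow_one_add (by linarith) hp1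
  have h1s : 1 + s = (M + b) / (M + a) := by rw [hs_def]; field_simp; ring
  have hstep : (m + b) / (m + a) ≤ 1 + (M / m) * s := by
    rw [div_le_iff₀ hma]
    have key : (b - a) * (m * (M + a)) ≤ (M * (b - a)) * (m + a) := by
      nlinarith [mul_nonneg (mul_nonneg (sub_nonneg.mpr hab) ha) (sub_nonneg.mpr hmM)]
    have h2 : (M / m) * s = (M * (b - a)) / (m * (M + a)) := by
      rw [hs_def]; field_simp
    rw [h2]
    rw [← sub_nonneg]
    have h3 : (1 + M * (b - a) / (m * (M + a))) * (m + a) - (m + b)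
        = (M * (b - a) * (m + a) - (b - a) * (m * (M + a))) / (m * (M + a)) := by
      field_simp; ring
    rw [h3]
    exact div_nonneg (by linarith) (by positivity)
  have hle : (m + b) / (m + a) ≤ ((M + b) / (M + a)) ^ (M / m) := by
    calc (m + b) / (m + a) ≤ 1 + (M / m) * s := hstep
    _ ≤ (1 + s) ^ (M / m) := hbern
    _ = ((M + b) / (M + a)) ^ (M / m) := by rw [h1s]
  have hlog : Real.log ((m + b) / (m + a)) ≤ (M / m) * Real.log ((M + b) / (M + a)) := by
    have := Real.log_le_log (by positivity) hle
    rwa [Real.log_rpow (by positivity)] at this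
  have h4 : m / M * ((M / m) * Real.log ((M + b) / (M + a))) = Real.log ((M + b) / (M + a)) := by
    field_simp
  calc m / M * Real.log ((m + b) / (m + a))
      ≤ m / M * ((M / m) * Real.log ((M + b) / (M + a))) := by
        apply mul_le_mul_of_nonneg_left hlog (by positivity)
    _ = Real.log ((M + b) / (M + a)) := h4

lemma telescope_sum (g : ℕ → ℝ) (K : ℕ) :
    ∑ k ∈ Finset.Icc 1 K, (g k - g (k - 1)) = g K - g 0 := by
  induction K with
  | zero => simp
  | succ K ih =>
    rw [← Finset.insert_Icc_right_eq_Icc_add_one (by omega), Finset.sum_insert (by simp)]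
    rw [ih]
    simp only [Nat.add_sub_cancel]
    ring

/-- The value of the one-block expected-capacity program for the special family. -/
lemma cexp_sup (K : ℕ) (hK : 2 ≤ K) (d : ℝ) (hd : 0 < d)
    (n F : ℕ → ℝ) (hn : ∀ k, n k = ∑ j ∈ Finset.Icc 1 k, d ^ j)
    (hF : ∀ k, F k = n k / n K) :
    sSup (CexpSetN K n F) = Real.log ((n K + 1) / n K) := by
  have npos : ∀ k, 1 ≤ k → 0 < n k := fun k hk => by
    rw [hn]
    exact Finset.sum_pos (fun j _ => pow_pos hd j) ⟨1, Finset.mem_Icc.mpr ⟨le_refl 1, hk⟩⟩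
  have nmono : ∀ k l : ℕ, k ≤ l → n k ≤ n l := fun k l hkl => by
    rw [hn, hn]
    exact Finset.sum_le_sum_of_subset_of_nonneg
      (Finset.Icc_subset_Icc_right hkl) (fun j _ _ => (pow_pos hd j).le)
  have hnK : 0 < n K := npos K (by omega)
  have hub : ∀ r ∈ CexpSetN K n F, r ≤ Real.log ((n K + 1) / n K) := by
    rintro r ⟨β, hβ0, hβm, hβK, rfl⟩
    have hβnn : ∀ k, k ≤ K → 0 ≤ β k := by
      intro k
      induction k with
      | zero => intro _; rw [hβ0]
      | succ k ih =>
        intro h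
        have h2 := hβm (k + 1) (by omega) h
        simp only [Nat.add_sub_cancel] at h2
        exact le_trans (ih (by omega)) h2
    calc ∑ k ∈ Finset.Icc 1 K, F k * Real.log ((n k + β k) / (n k + β (k - 1)))
        ≤ ∑ k ∈ Finset.Icc 1 K,
            (Real.log (n K + β k) - Real.log (n K + β (k - 1))) := by
          apply Finset.sum_le_sum
          intro k hk
          obtain ⟨hk1, hk2⟩ := Finset.mem_Icc.mp hk
          have h1 : 0 ≤ β (k - 1) := hβnn _ (by omega)
          have h2 : β (k - 1) ≤ β k := hβm k hk1 hk2
          have hkey := key_ineq (npos k hk1) (nmono k K hk2) h1 h2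
          have p1 : (0:ℝ) < n K + β k :=
            add_pos_of_pos_of_nonneg hnK (le_trans h1 h2)
          have p2 : (0:ℝ) < n K + β (k - 1) := add_pos_of_pos_of_nonneg hnK h1
          rw [hF k, ← Real.log_div p1.ne' p2.ne']
          exact hkey
      _ = Real.log (n K + β K) - Real.log (n K) := by
          rw [telescope_sum (fun k => Real.log (n K + β k)) K, hβ0, add_zero]
      _ ≤ Real.log (n K + 1) - Real.log (n K) := by
          have p1 : (0:ℝ) < n K + β K := add_pos_of_pos_of_nonneg hnK (hβnn K le_rfl)
          have := Real.log_le_log p1 (show n K + β K ≤ n K + 1 by linarith)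
          linarith
      _ = Real.log ((n K + 1) / n K) := (Real.log_div (by positivity) hnK.ne').symm
  have hmem : Real.log ((n K + 1) / n K) ∈ CexpSetN K n F := by
    refine ⟨fun j => if K ≤ j then 1 else 0, by simp; omega, ?_, by simp, ?_⟩
    · intro k h1 h2
      by_cases h : K ≤ k - 1
      · simp [h, show K ≤ k by omega]
      · simp only [if_neg h]
        split <;> norm_num
    · rw [Finset.sum_eq_single_of_mem K (Finset.mem_Icc.mpr ⟨by omega, le_rfl⟩)]
      · have e1 : (if K ≤ K then (1:ℝ) else 0) = 1 := if_pos le_rfl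
        have e2 : (if K ≤ K - 1 then (1:ℝ) else 0) = 0 := if_neg (by omega)
        simp only [e1, e2, add_zero, hF, div_self hnK.ne', one_mul]
      · intro k hk hne
        obtain ⟨hk1, hk2⟩ := Finset.mem_Icc.mp hk
        have e1 : (if K ≤ k then (1:ℝ) else 0) = 0 := if_neg (by omega)
        have e2 : (if K ≤ k - 1 then (1:ℝ) else 0) = 0 := if_neg (by omega)
        simp only [e1, e2, add_zero, div_self (npos k hk1).ne', Real.log_one, mul_zero]
  exact le_antisymm (csSup_le ⟨_, hmem⟩ hub) (le_csSup ⟨_, hub⟩ hmem)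

section Limits
variable {n : ℝ → ℕ → ℝ}

lemma tendsto_n_atTop (hn : ∀ d k, n d k = ∑ j ∈ Finset.Icc 1 k, d ^ j) (k : ℕ) (hk : 1 ≤ k) :
    Tendsto (fun d : ℝ => n d k) atTop atTop := by
  apply tendsto_atTop_mono' atTop ?_ tendsto_id
  filter_upwards [eventually_ge_atTop (0 : ℝ)] with d hd
  have : d ^ 1 ≤ ∑ j ∈ Finset.Icc 1 k, d ^ j :=
    Finset.single_le_sum (fun j _ => pow_nonneg hd j) (Finset.mem_Icc.mpr ⟨le_rfl, hk⟩)
  rw [hn]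
  simpa using this

lemma tendsto_nlog (hn : ∀ d k, n d k = ∑ j ∈ Finset.Icc 1 k, d ^ j) (k : ℕ) (hk : 1 ≤ k) :
    Tendsto (fun d : ℝ => n d k * Real.log (1 + 1 / n d k)) atTop (nhds 1) := by
  have h := (Real.tendsto_mul_log_one_add_div_atTop 1).comp (tendsto_n_atTop hn k hk)
  simpa [Function.comp_def] using h

lemma tendsto_ratio (hn : ∀ d k, n d k = ∑ j ∈ Finset.Icc 1 k, d ^ j) (k : ℕ) (hk : 1 ≤ k) :
    Tendsto (fun d : ℝ => n d k / d ^ k) atTop (nhds 1) := by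
  have hsum : Tendsto (fun d : ℝ => ∑ j ∈ Finset.Icc 1 k, (d⁻¹) ^ (k - j)) atTop
      (nhds (∑ j ∈ Finset.Icc 1 k, (0:ℝ) ^ (k - j))) := by
    apply tendsto_finset_sum
    intro j _
    exact tendsto_inv_atTop_zero.pow (k - j)
  have hval : (∑ j ∈ Finset.Icc 1 k, (0:ℝ) ^ (k - j)) = 1 := by
    rw [Finset.sum_eq_single_of_mem k (Finset.mem_Icc.mpr ⟨hk, le_rfl⟩)]
    · simp
    · intro j hj hne
      obtain ⟨_, hj2⟩ := Finset.mem_Icc.mp hj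
      exact zero_pow (by omega)
  rw [hval] at hsum
  apply hsum.congr'
  filter_upwards [eventually_gt_atTop (0 : ℝ)] with d hd
  have hd0 : d ≠ 0 := hd.ne'
  rw [hn, Finset.sum_div]
  apply Finset.sum_congr rfl
  intro j hj
  obtain ⟨_, hj2⟩ := Finset.mem_Icc.mp hj
  rw [inv_pow, pow_sub₀ d hd0 hj2, mul_comm, mul_inv, inv_inv, ← div_eq_mul_inv]

lemma tendsto_ratio' (hn : ∀ d k, n d k = ∑ j ∈ Finset.Icc 1 k, d ^ j) (k : ℕ) (hk : 1 ≤ k) :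
    Tendsto (fun d : ℝ => d ^ k / n d k) atTop (nhds 1) := by
  have := (tendsto_ratio hn k hk).inv₀ one_ne_zero
  simp only [inv_div, inv_one] at this
  exact this

lemma tendsto_A (hn : ∀ d k, n d k = ∑ j ∈ Finset.Icc 1 k, d ^ j) (k : ℕ) (hk : 1 ≤ k) :
    Tendsto (fun d : ℝ => d ^ k * Real.log (1 + 1 / n d k)) atTop (nhds 1) := by
  have h := (tendsto_ratio' hn k hk).mul (tendsto_nlog hn k hk)
  rw [one_mul] at h
  apply h.congr'
  filter_upwards [(tendsto_n_atTop hn k hk).eventually_gt_atTop 0] with d hd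
  field_simp

end Limits

/-- Forward part of the worst-case multiplicative gap: for the family
`n_k = ∑_{j=1}^k d^j`, `p_k = d^k/∑_{j=1}^K d^j` (so `F_k = n_k/n_K`), all
crossing points are `0`, the one-block expected capacity equals
`log((n_K+1)/n_K)`, and the multiplicative gap converges to `K` as `d → ∞`. -/
theorem multiplicative_gap_forward
    (K : ℕ) (hK : 2 ≤ K)
    (n : ℝ → ℕ → ℝ) (hn : ∀ d k, n d k = ∑ j ∈ Finset.Icc 1 k, d ^ j)
    (p : ℝ → ℕ → ℝ)
    (hp : ∀ d k, p d k = d ^ k / ∑ j ∈ Finset.Icc 1 K, d ^ j)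
    (F : ℝ → ℕ → ℝ) (hF : ∀ d k, F d k = n d k / n d K) :
    (∀ d : ℝ, 0 < d → ∀ k l, 1 ≤ k → k < l → l ≤ K →
      zc (n d) (F d) k l = 0) ∧
    (∀ d : ℝ, 0 < d →
      sSup (CexpSetN K (n d) (F d)) = Real.log ((n d K + 1) / n d K)) ∧
    Tendsto
      (fun d : ℝ =>
        (∑ k ∈ Finset.Icc 1 K, p d k * Real.log (1 + 1 / n d k)) /
          sSup (CexpSetN K (n d) (F d)))
      atTop (nhds (K : ℝ)) := by
  have part2 : ∀ d : ℝ, 0 < d →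
      sSup (CexpSetN K (n d) (F d)) = Real.log ((n d K + 1) / n d K) := by
    intro d hd
    exact cexp_sup K hK d hd (n d) (F d) (fun k => hn d k) (fun k => hF d k)
  refine ⟨?_, part2, ?_⟩
  · intro d hd k l hk hkl hlK
    unfold zc
    have hnum : F d k * n d l - F d l * n d k = 0 := by
      rw [hF d k, hF d l]; ring
    rw [hnum, zero_div]
  · -- the limit
    have hK1 : 1 ≤ K := by omega
    have hg : Tendsto
        (fun d : ℝ => ∑ k ∈ Finset.Icc 1 K,
          (d ^ k * Real.log (1 + 1 / n d k)) * (d ^ K / n d K) /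
            (d ^ K * Real.log (1 + 1 / n d K)))
        atTop (nhds (∑ k ∈ Finset.Icc 1 K, (1:ℝ))) := by
      apply tendsto_finset_sum
      intro k hk
      obtain ⟨hk1, _⟩ := Finset.mem_Icc.mp hk
      have h := ((tendsto_A hn k hk1).mul (tendsto_ratio' hn K hK1)).div
        (tendsto_A hn K hK1) one_ne_zero
      convert h using 2 <;> simp
    have hsum1 : (∑ k ∈ Finset.Icc 1 K, (1:ℝ)) = (K : ℝ) := by
      simp [Nat.card_Icc]
    rw [hsum1] at hg
    apply hg.congr'
    filter_upwards [eventually_ge_atTop (1 : ℝ)] with d hd1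
    have hd : 0 < d := lt_of_lt_of_le one_pos hd1
    have hnKpos : 0 < n d K := by
      rw [hn]
      exact Finset.sum_pos (fun j _ => pow_pos hd j)
        ⟨1, Finset.mem_Icc.mpr ⟨le_rfl, hK1⟩⟩
    have hLpos : 0 < Real.log (1 + 1 / n d K) :=
      Real.log_pos (by nlinarith [one_div_pos.mpr hnKpos])
    have hdK : (0:ℝ) < d ^ K := pow_pos hd K
    rw [part2 d hd]
    have hlog : Real.log ((n d K + 1) / n d K) = Real.log (1 + 1 / n d K) := by
      rw [add_div, div_self hnKpos.ne', add_comm]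
    rw [hlog, Finset.sum_div]
    apply Finset.sum_congr rfl
    intro k hk
    rw [hp d k, ← hn d K]
    have alg : ∀ x z w c : ℝ, c ≠ 0 → (x * (c / z)) / (c * w) = (x / z) / w := by
      intro x z w c hc
      rw [mul_div_assoc', div_div, show z * (c * w) = c * (z * w) by ring,
        show x * c = c * x by ring, mul_div_mul_left _ _ hc, ← div_div]
    rw [alg _ _ _ _ hdK.ne', div_mul_eq_mul_div]
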